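/- Let Ω ⊂ ℝ^d be open bounded with Lipschitz boundary, K(x) compact convex with B(0,α) ⊆ K(x) ⊆ B(0,M) and Hausdorff-continuous in x, φ⁰ the support function and d the induced Finsler distance. If u ∈ C(Ω) satisfies u(y) − u(x) ≤ d(x,y) for all x, y ∈ Ω, then u is locally Lipschitz, hence a.e. differentiable, and ∇u(x) ∈ K(x) for a.e. x ∈ Ω. -/

import Mathlib

open Metric Set Filter MeasureTheory
open scoped RealInnerProductSpace

/-- The Finsler pseudo-distance associated to a metric `φ` on a domain `Ω`. -/
noncomputable def finslerDist {n : ℕ} (Ω : Set (EuclideanSpace ℝ (Fin n)))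
    (φ : EuclideanSpace ℝ (Fin n) → EuclideanSpace ℝ (Fin n) → ℝ)
    (x y : EuclideanSpace ℝ (Fin n)) : ℝ :=
  sInf {r : ℝ | ∃ L : ℝ, 0 ≤ L ∧ ∃ γ γ' : ℝ → EuclideanSpace ℝ (Fin n),
    LipschitzOnWith 1 γ (Set.Icc 0 L) ∧ (∀ t ∈ Set.Icc 0 L, γ t ∈ Ω) ∧
    γ 0 = x ∧ γ L = y ∧
    (∀ᵐ s ∂(volume : Measure ℝ), s ∈ Set.Ioo 0 L →
      HasDerivAt γ (γ' s) s ∧ ‖γ' s‖ = 1) ∧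
    r = ∫ s in (0:ℝ)..L, φ (γ s) (γ' s)}

/-- The support function `φ⁰(x, q) = sup {⟪p, q⟫ : p ∈ K x}`. -/
noncomputable def suppFn {n : ℕ}
    (K : EuclideanSpace ℝ (Fin n) → Set (EuclideanSpace ℝ (Fin n)))
    (x q : EuclideanSpace ℝ (Fin n)) : ℝ :=
  sSup ((fun p => ⟪p, q⟫) '' K x)

section Aux

variable {n : ℕ}

/-- Bounded above. -/
lemma suppFn_bddAbove {K : EuclideanSpace ℝ (Fin n) → Set (EuclideanSpace ℝ (Fin n))}
    {x q : EuclideanSpace ℝ (Fin n)} {M : ℝ}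
    (hKb : K x ⊆ Metric.closedBall 0 M) :
    BddAbove ((fun p => ⟪p, q⟫) '' K x) := by
  refine ⟨M * ‖q‖, ?_⟩
  rintro r ⟨p, hp, rfl⟩
  have h1 : ‖p‖ ≤ M := by simpa using mem_closedBall_zero_iff.1 (hKb hp)
  calc ⟪p, q⟫ ≤ ‖p‖ * ‖q‖ := real_inner_le_norm p q
    _ ≤ M * ‖q‖ := mul_le_mul_of_nonneg_right h1 (norm_nonneg q)

lemma le_suppFn {K : EuclideanSpace ℝ (Fin n) → Set (EuclideanSpace ℝ (Fin n))}
    {x q p : EuclideanSpace ℝ (Fin n)} {M : ℝ}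
    (hKb : K x ⊆ Metric.closedBall 0 M) (hp : p ∈ K x) :
    ⟪p, q⟫ ≤ suppFn K x q :=
  le_csSup (suppFn_bddAbove hKb) ⟨p, hp, rfl⟩

lemma suppFn_le {K : EuclideanSpace ℝ (Fin n) → Set (EuclideanSpace ℝ (Fin n))}
    {x q : EuclideanSpace ℝ (Fin n)} {c : ℝ}
    (hne : (K x).Nonempty) (h : ∀ p ∈ K x, ⟪p, q⟫ ≤ c) :
    suppFn K x q ≤ c := by
  apply csSup_le (hne.image _)
  rintro r ⟨p, hp, rfl⟩
  exact h p hp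

lemma suppFn_nonneg {K : EuclideanSpace ℝ (Fin n) → Set (EuclideanSpace ℝ (Fin n))}
    {x q : EuclideanSpace ℝ (Fin n)} {M : ℝ}
    (hKb : K x ⊆ Metric.closedBall 0 M) (h0 : (0 : EuclideanSpace ℝ (Fin n)) ∈ K x) :
    0 ≤ suppFn K x q := by
  simpa using le_suppFn (q := q) hKb h0

lemma suppFn_le_M {K : EuclideanSpace ℝ (Fin n) → Set (EuclideanSpace ℝ (Fin n))}
    {x q : EuclideanSpace ℝ (Fin n)} {M : ℝ}
    (hKb : K x ⊆ Metric.closedBall 0 M) (hne : (K x).Nonempty) :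
    suppFn K x q ≤ M * ‖q‖ := by
  apply suppFn_le hne
  intro p hp
  have h1 : ‖p‖ ≤ M := by simpa using mem_closedBall_zero_iff.1 (hKb hp)
  calc ⟪p, q⟫ ≤ ‖p‖ * ‖q‖ := real_inner_le_norm p q
    _ ≤ M * ‖q‖ := mul_le_mul_of_nonneg_right h1 (norm_nonneg q)

/-- Hausdorff distance controls variation of the support function. -/
lemma suppFn_le_suppFn_add {K : EuclideanSpace ℝ (Fin n) → Set (EuclideanSpace ℝ (Fin n))}
    {y z q : EuclideanSpace ℝ (Fin n)} {M : ℝ}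
    (hby : K y ⊆ Metric.closedBall 0 M) (hbz : K z ⊆ Metric.closedBall 0 M)
    (hney : (K y).Nonempty) (hcz : IsCompact (K z)) (hnez : (K z).Nonempty) :
    suppFn K y q ≤ suppFn K z q + Metric.hausdorffDist (K y) (K z) * ‖q‖ := by
  apply suppFn_le hney
  intro p hp
  have hfin : EMetric.hausdorffEdist (K y) (K z) ≠ ⊤ :=
    Metric.hausdorffEdist_ne_top_of_nonempty_of_bounded hney hnez
      ((Metric.isBounded_closedBall).subset hby) hcz.isBounded
  obtain ⟨p', hp', hdist⟩ := hcz.exists_infDist_eq_dist hnez p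
  have h1 : dist p p' ≤ Metric.hausdorffDist (K y) (K z) := by
    rw [← hdist]
    exact Metric.infDist_le_hausdorffDist_of_mem hp hfin
  have h2 : ⟪p, q⟫ = ⟪p', q⟫ + ⟪p - p', q⟫ := by
    rw [← inner_add_left]
    congr 1
    abel
  have h3 : ⟪p - p', q⟫ ≤ Metric.hausdorffDist (K y) (K z) * ‖q‖ := by
    calc ⟪p - p', q⟫ ≤ ‖p - p'‖ * ‖q‖ := real_inner_le_norm _ _
      _ ≤ Metric.hausdorffDist (K y) (K z) * ‖q‖ := by
        apply mul_le_mul_of_nonneg_right _ (norm_nonneg q)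
        rwa [← dist_eq_norm]
  have h4 : ⟪p', q⟫ ≤ suppFn K z q := le_suppFn hbz hp'
  linarith

/-- One-sided homogeneity in the direction we need. -/
lemma suppFn_norm_smul {K : EuclideanSpace ℝ (Fin n) → Set (EuclideanSpace ℝ (Fin n))}
    {x q : EuclideanSpace ℝ (Fin n)} {M : ℝ}
    (hKb : K x ⊆ Metric.closedBall 0 M) (hne : (K x).Nonempty) (hq : q ≠ 0) :
    ‖q‖ * suppFn K x (‖q‖⁻¹ • q) ≤ suppFn K x q := by
  have hq' : (0 : ℝ) < ‖q‖ := norm_pos_iff.2 hq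
  have h1 : suppFn K x (‖q‖⁻¹ • q) ≤ ‖q‖⁻¹ * suppFn K x q := by
    apply suppFn_le hne
    intro p hp
    rw [real_inner_smul_right]
    exact mul_le_mul_of_nonneg_left (le_suppFn hKb hp) (by positivity)
  calc ‖q‖ * suppFn K x (‖q‖⁻¹ • q) ≤ ‖q‖ * (‖q‖⁻¹ * suppFn K x q) :=
        mul_le_mul_of_nonneg_left h1 hq'.le
    _ = suppFn K x q := by
        rw [← mul_assoc, mul_inv_cancel₀ hq'.ne', one_mul]

/-- Continuity of `y ↦ suppFn K y q` on `closure Ω`. -/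
lemma suppFn_continuousOn {K : EuclideanSpace ℝ (Fin n) → Set (EuclideanSpace ℝ (Fin n))}
    {Ω : Set (EuclideanSpace ℝ (Fin n))} {M : ℝ}
    (hKcomp : ∀ x ∈ closure Ω, IsCompact (K x))
    (hKne : ∀ x ∈ closure Ω, (K x).Nonempty)
    (hKout : ∀ x ∈ closure Ω, K x ⊆ Metric.closedBall 0 M)
    (hKcont : ∀ x ∈ closure Ω, Tendsto (fun y => Metric.hausdorffDist (K y) (K x))
      (nhdsWithin x (closure Ω)) (nhds 0))
    (q : EuclideanSpace ℝ (Fin n)) :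
    ContinuousOn (fun y => suppFn K y q) (closure Ω) := by
  intro x hx
  have hbnd : ∀ᶠ y in nhdsWithin x (closure Ω), dist (suppFn K y q) (suppFn K x q) ≤
      Metric.hausdorffDist (K y) (K x) * ‖q‖ := by
    filter_upwards [self_mem_nhdsWithin] with y hy
    have h1 := suppFn_le_suppFn_add (q := q) (hKout y hy) (hKout x hx) (hKne y hy)
      (hKcomp x hx) (hKne x hx)
    have h2 := suppFn_le_suppFn_add (q := q) (hKout x hx) (hKout y hy) (hKne x hx)
      (hKcomp y hy) (hKne y hy)
    rw [Metric.hausdorffDist_comm] at h2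
    rw [Real.dist_eq, abs_sub_le_iff]
    constructor <;> linarith
  have htend : Tendsto (fun y => Metric.hausdorffDist (K y) (K x) * ‖q‖)
      (nhdsWithin x (closure Ω)) (nhds 0) := by
    simpa using (hKcont x hx).mul_const ‖q‖
  have hd : Tendsto (fun y => dist (suppFn K y q) (suppFn K x q))
      (nhdsWithin x (closure Ω)) (nhds 0) :=
    squeeze_zero' (Eventually.of_forall fun _ => dist_nonneg) hbnd htend
  rw [ContinuousWithinAt, tendsto_iff_dist_tendsto_zero]
  exact hd

/-- The set whose infimum is the Finsler distance is bounded below by `0`. -/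
lemma finslerDist_set_bddBelow {K : EuclideanSpace ℝ (Fin n) → Set (EuclideanSpace ℝ (Fin n))}
    {Ω : Set (EuclideanSpace ℝ (Fin n))} {α M : ℝ} (hα : 0 < α)
    (hKin : ∀ x ∈ closure Ω, Metric.closedBall (0 : EuclideanSpace ℝ (Fin n)) α ⊆ K x)
    (hKout : ∀ x ∈ closure Ω, K x ⊆ Metric.closedBall (0 : EuclideanSpace ℝ (Fin n)) M)
    (x y : EuclideanSpace ℝ (Fin n)) :
    ∀ r ∈ {r : ℝ | ∃ L : ℝ, 0 ≤ L ∧ ∃ γ γ' : ℝ → EuclideanSpace ℝ (Fin n),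
      LipschitzOnWith 1 γ (Set.Icc 0 L) ∧ (∀ t ∈ Set.Icc 0 L, γ t ∈ Ω) ∧
      γ 0 = x ∧ γ L = y ∧
      (∀ᵐ s ∂(volume : Measure ℝ), s ∈ Set.Ioo 0 L →
        HasDerivAt γ (γ' s) s ∧ ‖γ' s‖ = 1) ∧
      r = ∫ s in (0:ℝ)..L, suppFn K (γ s) (γ' s)}, 0 ≤ r := by
  rintro r ⟨L, hL, γ, γ', _, hmem, _, _, _, rfl⟩
  apply intervalIntegral.integral_nonneg hL
  intro s hs
  have hsc : γ s ∈ closure Ω := subset_closure (hmem s hs)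
  exact suppFn_nonneg (hKout _ hsc) (hKin _ hsc (Metric.mem_closedBall_self hα.le))

/-- Distance along a straight segment is bounded by `c * L` if the support function
is bounded by `c` along the segment. -/
lemma finslerDist_segment_le {K : EuclideanSpace ℝ (Fin n) → Set (EuclideanSpace ℝ (Fin n))}
    {Ω : Set (EuclideanSpace ℝ (Fin n))} {α M : ℝ} (hα : 0 < α)
    (hKcomp : ∀ x ∈ closure Ω, IsCompact (K x))
    (hKin : ∀ x ∈ closure Ω, Metric.closedBall (0 : EuclideanSpace ℝ (Fin n)) α ⊆ K x)
    (hKout : ∀ x ∈ closure Ω, K x ⊆ Metric.closedBall (0 : EuclideanSpace ℝ (Fin n)) M)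
    (hKcont : ∀ x ∈ closure Ω, Tendsto (fun y => Metric.hausdorffDist (K y) (K x))
      (nhdsWithin x (closure Ω)) (nhds 0))
    {x e : EuclideanSpace ℝ (Fin n)} {L c : ℝ} (he : ‖e‖ = 1) (hL : 0 ≤ L)
    (hseg : ∀ s ∈ Set.Icc (0:ℝ) L, x + s • e ∈ Ω)
    (hc : ∀ s ∈ Set.Icc (0:ℝ) L, suppFn K (x + s • e) e ≤ c) :
    finslerDist Ω (suppFn K) x (x + L • e) ≤ c * L := by
  have hKne : ∀ y ∈ closure Ω, (K y).Nonempty :=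
    fun y hy => ⟨0, hKin y hy (Metric.mem_closedBall_self hα.le)⟩
  set γ : ℝ → EuclideanSpace ℝ (Fin n) := fun t => x + t • e with hγ
  have hlip : LipschitzWith 1 γ := by
    apply LipschitzWith.of_dist_le_mul
    intro s t
    have h1 : γ s - γ t = (s - t) • e := by
      simp only [hγ, sub_smul]
      abel
    rw [dist_eq_norm, h1, norm_smul, he, mul_one, Real.norm_eq_abs, Real.dist_eq,
      NNReal.coe_one, one_mul]
  have hderiv : ∀ t : ℝ, HasDerivAt γ e t := by
    intro t
    have := ((hasDerivAt_id t).smul_const e).const_add x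
    simpa [hγ] using this
  -- continuity of the integrand
  have hcont : ContinuousOn (fun s : ℝ => suppFn K (γ s) e) (Set.Icc 0 L) := by
    apply (suppFn_continuousOn hKcomp hKne hKout hKcont e).comp
      hlip.continuous.continuousOn
    intro s hs
    exact subset_closure (hseg s hs)
  have hint : IntervalIntegrable (fun s : ℝ => suppFn K (γ s) e) volume 0 L := by
    apply ContinuousOn.intervalIntegrable
    rwa [Set.uIcc_of_le hL]
  have hmem : (∫ s in (0:ℝ)..L, suppFn K (γ s) e) ∈ {r : ℝ | ∃ L' : ℝ, 0 ≤ L' ∧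
      ∃ γ γ' : ℝ → EuclideanSpace ℝ (Fin n),
      LipschitzOnWith 1 γ (Set.Icc 0 L') ∧ (∀ t ∈ Set.Icc 0 L', γ t ∈ Ω) ∧
      γ 0 = x ∧ γ L' = x + L • e ∧
      (∀ᵐ s ∂(volume : Measure ℝ), s ∈ Set.Ioo 0 L' →
        HasDerivAt γ (γ' s) s ∧ ‖γ' s‖ = 1) ∧
      r = ∫ s in (0:ℝ)..L', suppFn K (γ s) (γ' s)} := by
    refine ⟨L, hL, γ, fun _ => e, hlip.lipschitzOnWith, hseg, by simp [hγ], rfl,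
      ae_of_all _ fun s _ => ⟨hderiv s, he⟩, rfl⟩
  have h1 : finslerDist Ω (suppFn K) x (x + L • e) ≤ ∫ s in (0:ℝ)..L, suppFn K (γ s) e := by
    apply csInf_le _ hmem
    exact ⟨0, finslerDist_set_bddBelow hα hKin hKout x (x + L • e)⟩
  refine h1.trans ?_
  calc (∫ s in (0:ℝ)..L, suppFn K (γ s) e) ≤ ∫ _ in (0:ℝ)..L, c :=
        intervalIntegral.integral_mono_on hL hint intervalIntegrable_const hc
    _ = c * L := by simp [mul_comm]

/-- Duality: a point whose pairings are dominated by the support function lies in `K x`. -/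
lemma mem_of_forall_inner_le_suppFn {K : EuclideanSpace ℝ (Fin n) → Set (EuclideanSpace ℝ (Fin n))}
    {x p : EuclideanSpace ℝ (Fin n)}
    (hcomp : IsCompact (K x)) (hconv : Convex ℝ (K x)) (hne : (K x).Nonempty)
    (h : ∀ q, ⟪p, q⟫ ≤ suppFn K x q) : p ∈ K x := by
  by_contra hp
  obtain ⟨f, t, hst, htx⟩ :=
    geometric_hahn_banach_closed_point hconv hcomp.isClosed hp
  set q := (InnerProductSpace.toDual ℝ (EuclideanSpace ℝ (Fin n))).symm f with hqdef
  have hfq : ∀ z, f z = ⟪z, q⟫ := by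
    intro z
    rw [real_inner_comm]
    exact (InnerProductSpace.toDual_symm_apply).symm
  have h1 : suppFn K x q ≤ t := by
    apply suppFn_le hne
    intro p' hp'
    have := (hst p' hp').le
    rwa [hfq p'] at this
  have h2 := h q
  rw [hfq p] at htx
  linarith

end Aux

theorem gradient_in_K_of_one_lipschitz_wrt_finslerDist {n : ℕ}
    (Ω : Set (EuclideanSpace ℝ (Fin n)))
    (hΩo : IsOpen Ω) (hΩb : Bornology.IsBounded Ω) (hΩc : IsConnected Ω)
    (K : EuclideanSpace ℝ (Fin n) → Set (EuclideanSpace ℝ (Fin n)))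
    (α M : ℝ) (hα : 0 < α) (hM : 0 < M)
    (hKcomp : ∀ x ∈ closure Ω, IsCompact (K x))
    (hKconv : ∀ x ∈ closure Ω, Convex ℝ (K x))
    (hKin : ∀ x ∈ closure Ω, Metric.closedBall (0 : EuclideanSpace ℝ (Fin n)) α ⊆ K x)
    (hKout : ∀ x ∈ closure Ω, K x ⊆ Metric.closedBall (0 : EuclideanSpace ℝ (Fin n)) M)
    (hKcont : ∀ x ∈ closure Ω, Tendsto (fun y => Metric.hausdorffDist (K y) (K x))
      (nhdsWithin x (closure Ω)) (nhds 0))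
    (u : EuclideanSpace ℝ (Fin n) → ℝ) (hu : ContinuousOn u Ω)
    (hlip : ∀ x ∈ Ω, ∀ y ∈ Ω, u y - u x ≤ finslerDist Ω (suppFn K) x y) :
    (∀ x ∈ Ω, ∃ ε > 0, ∃ C : NNReal, LipschitzOnWith C u (Metric.ball x ε)) ∧
    (∀ᵐ x ∂(volume : Measure (EuclideanSpace ℝ (Fin n))), x ∈ Ω →
      DifferentiableAt ℝ u x ∧ gradient u x ∈ K x) := by
  have hKne : ∀ y ∈ closure Ω, (K y).Nonempty :=
    fun y hy => ⟨0, hKin y hy (Metric.mem_closedBall_self hα.le)⟩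
  -- Step 1: one-sided bound `u z - u y ≤ M * dist z y` on convex subsets of `Ω`.
  have hseg_bound : ∀ y ∈ Ω, ∀ z ∈ Ω,
      (∀ s ∈ Set.Icc (0:ℝ) ‖z - y‖, y + s • (‖z - y‖⁻¹ • (z - y)) ∈ Ω) →
      u z - u y ≤ M * dist z y := by
    intro y hy z hz hsub
    rcases eq_or_ne z y with rfl | hzy
    · simp
    have hzy' : z - y ≠ 0 := sub_ne_zero.2 hzy
    have hnorm : (0:ℝ) < ‖z - y‖ := norm_pos_iff.2 hzy'
    set e : EuclideanSpace ℝ (Fin n) := ‖z - y‖⁻¹ • (z - y) with hedef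
    have he : ‖e‖ = 1 := by
      rw [hedef, norm_smul, Real.norm_eq_abs, abs_inv, abs_of_pos hnorm,
        inv_mul_cancel₀ hnorm.ne']
    have hze : z = y + ‖z - y‖ • e := by
      rw [hedef, smul_smul, mul_inv_cancel₀ hnorm.ne', one_smul]
      abel
    have hc : ∀ s ∈ Set.Icc (0:ℝ) ‖z - y‖, suppFn K (y + s • e) e ≤ M := by
      intro s hs
      have hmem : y + s • e ∈ closure Ω := subset_closure (hsub s hs)
      have := suppFn_le_M (q := e) (hKout _ hmem) (hKne _ hmem)
      rwa [he, mul_one] at this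
    have hd := finslerDist_segment_le hα hKcomp hKin hKout hKcont he hnorm.le hsub hc
    rw [← hze] at hd
    have := hlip y hy z hz
    rw [dist_eq_norm]
    linarith
  -- Step 2: local Lipschitz bound.
  have hlipball : ∀ x ∈ Ω, ∃ ε > 0, Metric.ball x ε ⊆ Ω ∧
      LipschitzOnWith M.toNNReal u (Metric.ball x ε) := by
    intro x hx
    obtain ⟨ε, hε, hball⟩ := Metric.isOpen_iff.1 hΩo x hx
    refine ⟨ε, hε, hball, ?_⟩
    apply LipschitzOnWith.of_dist_le_mul
    intro y hy z hz
    have hsub : ∀ w1 ∈ Metric.ball x ε, ∀ w2 ∈ Metric.ball x ε,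
        ∀ s ∈ Set.Icc (0:ℝ) ‖w2 - w1‖, w1 + s • (‖w2 - w1‖⁻¹ • (w2 - w1)) ∈ Ω := by
      intro w1 hw1 w2 hw2 s hs
      rcases eq_or_ne w2 w1 with rfl | hne
      · simpa [sub_self] using hball (by simpa using hw1)
      have hnorm : (0:ℝ) < ‖w2 - w1‖ := norm_pos_iff.2 (sub_ne_zero.2 hne)
      apply hball
      have hid : w1 + s • (‖w2 - w1‖⁻¹ • (w2 - w1)) =
          (1 - s / ‖w2 - w1‖) • w1 + (s / ‖w2 - w1‖) • w2 := by
        rw [div_eq_mul_inv]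
        module
      rw [hid]
      have hs1 : 0 ≤ s / ‖w2 - w1‖ := div_nonneg hs.1 hnorm.le
      have hs2 : s / ‖w2 - w1‖ ≤ 1 := (div_le_one hnorm).2 hs.2
      exact (convex_ball x ε) hw1 hw2 (by linarith) hs1 (by ring)
    have h1 : u z - u y ≤ M * dist z y :=
      hseg_bound y (hball hy) z (hball hz) (hsub y hy z hz)
    have h2 : u y - u z ≤ M * dist y z :=
      hseg_bound z (hball hz) y (hball hy) (hsub z hz y hy)
    rw [dist_comm z y] at h1
    rw [Real.dist_eq, abs_sub_le_iff, Real.coe_toNNReal M hM.le]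
    exact ⟨h2, h1⟩
  -- Step 3: at points of differentiability, the gradient pairs below the support function.
  have hgrad_mem : ∀ x ∈ Ω, DifferentiableAt ℝ u x → gradient u x ∈ K x := by
    intro x hx hd
    have hxc : x ∈ closure Ω := subset_closure hx
    apply mem_of_forall_inner_le_suppFn (hKcomp x hxc) (hKconv x hxc) (hKne x hxc)
    intro q
    have hgq : ⟪gradient u x, q⟫ = fderiv ℝ u x q := InnerProductSpace.toDual_symm_apply
    rcases eq_or_ne q 0 with rfl | hq
    · rw [inner_zero_right]
      exact suppFn_nonneg (hKout x hxc) (hKin x hxc (Metric.mem_closedBall_self hα.le))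
    have hnq : (0:ℝ) < ‖q‖ := norm_pos_iff.2 hq
    set e : EuclideanSpace ℝ (Fin n) := ‖q‖⁻¹ • q with hedef
    have he : ‖e‖ = 1 := by
      rw [hedef, norm_smul, Real.norm_eq_abs, abs_inv, abs_of_pos hnq, inv_mul_cancel₀ hnq.ne']
    -- derivative of t ↦ u (x + t q) at 0
    have hv : HasDerivAt (fun t : ℝ => u (x + t • q)) (fderiv ℝ u x q) 0 := by
      have h1 : HasDerivAt (fun t : ℝ => x + t • q) q 0 := by
        simpa using ((hasDerivAt_id (0:ℝ)).smul_const q).const_add x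
      have h2 : HasFDerivAt u (fderiv ℝ u x) ((fun t : ℝ => x + t • q) 0) := by
        simpa using hd.hasFDerivAt
      exact h2.comp_hasDerivAt 0 h1
    have hslope : Tendsto (slope (fun t : ℝ => u (x + t • q)) 0) (nhdsWithin 0 (Set.Ioi 0))
        (nhds (fderiv ℝ u x q)) :=
      (hasDerivAt_iff_tendsto_slope.1 hv).mono_left
        (nhdsWithin_mono 0 fun t ht => ne_of_gt ht)
    -- for every δ > 0, the directional derivative is ≤ suppFn + δ
    have hkey : ∀ δ : ℝ, 0 < δ → fderiv ℝ u x q ≤ suppFn K x q + δ := by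
      intro δ hδ
      obtain ⟨ρ, hρ, hballΩ⟩ := Metric.isOpen_iff.1 hΩo x hx
      set δ' : ℝ := δ / ‖q‖ with hδ'def
      have hδ' : 0 < δ' := by positivity
      obtain ⟨κ, hκ, hκh⟩ := (Metric.tendsto_nhdsWithin_nhds).1 (hKcont x hxc) δ' hδ'
      set τ : ℝ := min ρ κ / ‖q‖ with hτdef
      have hτ : 0 < τ := div_pos (lt_min hρ hκ) hnq
      apply le_of_tendsto hslope
      filter_upwards [Ioo_mem_nhdsGT_of_mem (Set.mem_Ico.2 ⟨le_refl (0:ℝ), hτ⟩)] with t ht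
      obtain ⟨ht0, htτ⟩ := ht
      -- segment from x to x + t q stays in the ball of radius min ρ κ
      have hsegmem : ∀ s ∈ Set.Icc (0:ℝ) (t * ‖q‖), x + s • e ∈ Metric.ball x (min ρ κ) := by
        intro s hs
        rw [Metric.mem_ball, dist_eq_norm]
        have : x + s • e - x = s • e := by abel
        rw [this, norm_smul, he, mul_one, Real.norm_eq_abs, abs_of_nonneg hs.1]
        calc s ≤ t * ‖q‖ := hs.2
          _ < τ * ‖q‖ := by
            exact mul_lt_mul_of_pos_right htτ hnq
          _ = min ρ κ := by
            rw [hτdef, div_mul_cancel₀ _ hnq.ne']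
      have hsegΩ : ∀ s ∈ Set.Icc (0:ℝ) (t * ‖q‖), x + s • e ∈ Ω := by
        intro s hs
        exact hballΩ (Metric.ball_subset_ball (min_le_left ρ κ) (hsegmem s hs))
      have hLnn : 0 ≤ t * ‖q‖ := by positivity
      have hcbound : ∀ s ∈ Set.Icc (0:ℝ) (t * ‖q‖),
          suppFn K (x + s • e) e ≤ suppFn K x e + δ' := by
        intro s hs
        have hmemc : x + s • e ∈ closure Ω := subset_closure (hsegΩ s hs)
        have h1 := suppFn_le_suppFn_add (q := e) (hKout _ hmemc) (hKout x hxc)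
          (hKne _ hmemc) (hKcomp x hxc) (hKne x hxc)
        have h2 : Metric.hausdorffDist (K (x + s • e)) (K x) < δ' := by
          have hd' := hκh hmemc (by
            have := Metric.ball_subset_ball (min_le_right ρ κ) (hsegmem s hs)
            simpa [Metric.mem_ball] using this)
          rwa [Real.dist_eq, sub_zero, abs_of_nonneg Metric.hausdorffDist_nonneg] at hd'
        nlinarith [norm_nonneg e, he]
      have hdle := finslerDist_segment_le hα hKcomp hKin hKout hKcont he hLnn hsegΩ hcbound
      have hqe : x + (t * ‖q‖) • e = x + t • q := by
        rw [hedef, smul_smul, mul_assoc, mul_inv_cancel₀ hnq.ne', mul_one]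
      rw [hqe] at hdle
      have hxq : x + t • q ∈ Ω := by
        have := hsegΩ (t * ‖q‖) (Set.mem_Icc.2 ⟨hLnn, le_refl _⟩)
        rwa [hqe] at this
      have hub := hlip x hx (x + t • q) hxq
      have hsupe : ‖q‖ * suppFn K x e ≤ suppFn K x q :=
        suppFn_norm_smul (hKout x hxc) (hKne x hxc) hq
      have hslope_eq : slope (fun t : ℝ => u (x + t • q)) 0 t =
          (u (x + t • q) - u (x + (0:ℝ) • q)) / t := by
        rw [slope_def_field]
        field_simp
        rw [sub_zero]
      rw [hslope_eq]
      have h0q : x + (0:ℝ) • q = x := by simp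
      rw [h0q]
      rw [div_le_iff₀ ht0]
      have hδeq : δ' * ‖q‖ = δ := by
        rw [hδ'def, div_mul_cancel₀ _ hnq.ne']
      calc u (x + t • q) - u x ≤ finslerDist Ω (suppFn K) x (x + t • q) := hub
        _ ≤ (suppFn K x e + δ') * (t * ‖q‖) := hdle
        _ = (‖q‖ * suppFn K x e + δ' * ‖q‖) * t := by ring
        _ ≤ (suppFn K x q + δ) * t := by
            have : ‖q‖ * suppFn K x e + δ' * ‖q‖ ≤ suppFn K x q + δ := by
              rw [hδeq]; linarith
            exact mul_le_mul_of_nonneg_right this ht0.le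
    rw [hgq]
    by_contra hlt
    push_neg at hlt
    have hδ : 0 < (fderiv ℝ u x q - suppFn K x q) / 2 := by linarith
    have := hkey _ hδ
    linarith
  -- Step 4: assembly.
  constructor
  · intro x hx
    obtain ⟨ε, hε, _, hL⟩ := hlipball x hx
    exact ⟨ε, hε, M.toNNReal, hL⟩
  · -- countable cover of Ω by balls on which u is Lipschitz
    have hchoice : ∀ i : Ω, ∃ ε > 0, Metric.ball (i : EuclideanSpace ℝ (Fin n)) ε ⊆ Ω ∧
        LipschitzOnWith M.toNNReal u (Metric.ball (i : EuclideanSpace ℝ (Fin n)) ε) :=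
      fun i => hlipball i i.2
    choose ε hε hsub hLip using hchoice
    obtain ⟨T, hTc, hTU⟩ := TopologicalSpace.isOpen_iUnion_countable
      (fun i : Ω => Metric.ball (i : EuclideanSpace ℝ (Fin n)) (ε i))
      (fun i => Metric.isOpen_ball)
    have hcover : Ω ⊆ ⋃ i ∈ T, Metric.ball (i : EuclideanSpace ℝ (Fin n)) (ε i) := by
      rw [hTU]
      intro x hx
      exact Set.mem_iUnion.2 ⟨⟨x, hx⟩, Metric.mem_ball_self (hε ⟨x, hx⟩)⟩
    have haeball : ∀ i ∈ T, ∀ᵐ x ∂(volume : Measure (EuclideanSpace ℝ (Fin n))),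
        x ∈ Metric.ball (i : EuclideanSpace ℝ (Fin n)) (ε i) →
        DifferentiableAt ℝ u x ∧ gradient u x ∈ K x := by
      intro i _
      filter_upwards [(hLip i).ae_differentiableWithinAt_of_mem] with x hx hxB
      have hdiff : DifferentiableAt ℝ u x :=
        (hx hxB).differentiableAt (Metric.isOpen_ball.mem_nhds hxB)
      exact ⟨hdiff, hgrad_mem x (hsub i hxB) hdiff⟩
    filter_upwards [(ae_ball_iff hTc).2 haeball] with x hx hxΩ
    obtain ⟨i, hiT, hiB⟩ := Set.mem_iUnion₂.1 (hcover hxΩ)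
    exact hx i hiT hiB
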